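/- For every positive integer n, there exist closed half-planes H₁, …, Hₙ and H′₁, …, H′ₙ in ℝ² such that Hᵢ ∩ H′ᵢ = ∅ for every i ∈ {1,…,n}, while every other pair among these 2n half-planes has nonempty intersection. Consequently, the complement of a perfect matching on 2n vertices (an antimatching of arbitrary size) is the intersection graph of a family of closed half-planes. -/

import Mathlib

noncomputable def amhp_f (c : ℝ) : (ℝ × ℝ) →ₗ[ℝ] ℝ :=
  LinearMap.fst ℝ ℝ ℝ + c • LinearMap.snd ℝ ℝ ℝ

lemma amhp_f_apply (c : ℝ) (p : ℝ × ℝ) : amhp_f c p = p.1 + c * p.2 := rfl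

lemma amhp_f_ne_zero (c : ℝ) : amhp_f c ≠ 0 := by
  intro h
  have : amhp_f c (1, 0) = 0 := by rw [h]; rfl
  simp [amhp_f_apply] at this

/-- For every `n ≥ 1` there are closed half-planes `H₁, …, Hₙ, H′₁, …, H′ₙ` in `ℝ²`
with `Hᵢ ∩ H′ᵢ = ∅` for every `i`, while every other pair among these `2n`
half-planes intersects.  Hence the complement of a perfect matching on `2n`
vertices is an intersection graph of closed half-planes. -/
theorem antimatching_halfplanes (n : ℕ) (hn : 0 < n) :
    ∃ H H' : Fin n → Set (ℝ × ℝ),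
      (∀ i, ∃ (f : (ℝ × ℝ) →ₗ[ℝ] ℝ) (a : ℝ), f ≠ 0 ∧ H i = {x | f x ≤ a}) ∧
      (∀ i, ∃ (f : (ℝ × ℝ) →ₗ[ℝ] ℝ) (a : ℝ), f ≠ 0 ∧ H' i = {x | f x ≤ a}) ∧
      (∀ i, H i ∩ H' i = ∅) ∧
      (∀ i j, i ≠ j → (H i ∩ H j).Nonempty) ∧
      (∀ i j, i ≠ j → (H' i ∩ H' j).Nonempty) ∧
      (∀ i j, i ≠ j → (H i ∩ H' j).Nonempty) := by
  refine ⟨fun i => {x | amhp_f (i : ℝ) x ≤ 0},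
          fun i => {x | (-amhp_f (i : ℝ)) x ≤ -1}, ?_, ?_, ?_, ?_, ?_, ?_⟩
  · exact fun i => ⟨amhp_f (i : ℝ), 0, amhp_f_ne_zero _, rfl⟩
  · exact fun i => ⟨-amhp_f (i : ℝ), -1, neg_ne_zero.mpr (amhp_f_ne_zero _), rfl⟩
  · intro i
    ext x
    simp only [Set.mem_inter_iff, Set.mem_setOf_eq, LinearMap.neg_apply,
      Set.mem_empty_iff_false, iff_false]
    rintro ⟨h1, h2⟩
    linarith
  · intro i j _
    exact ⟨(-1, 0), by simp [amhp_f_apply], by simp [amhp_f_apply]⟩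
  · intro i j _
    refine ⟨(1, 0), ?_, ?_⟩ <;> simp [amhp_f_apply]
  · intro i j hij
    have hc : (i : ℝ) ≠ (j : ℝ) := by
      exact_mod_cast fun h => hij (Fin.val_injective (by exact_mod_cast h))
    set d : ℝ := (j : ℝ) - (i : ℝ) with hd
    have hd0 : d ≠ 0 := sub_ne_zero.mpr (Ne.symm hc)
    refine ⟨(-(i : ℝ) / d, 1 / d), ?_, ?_⟩
    · show amhp_f (i : ℝ) _ ≤ 0
      rw [amhp_f_apply]
      field_simp
      norm_num
    · show (-amhp_f (j : ℝ)) _ ≤ -1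
      simp only [LinearMap.neg_apply, amhp_f_apply]
      have : -(i : ℝ) / d + (j : ℝ) * (1 / d) = 1 := by
        field_simp [hd]; ring
      linarith
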